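/- Let d ≥ 1, let N ⊂ ℝ^d be a nonempty compact set, let f : ℝ^d → [0, ∞) be continuous, let δ ∈ (0,1) and C₁ > 0, and assume f₁ := inf{ f(v) : v ∈ ℝ^d, |v| ≤ 1, dist(v, N) ≥ δ/2 } > 0. Set λ₀ := δ/(2C₁) and μ₀ := (π/2) λ₀² f₁. Let Ω ⊆ ℝ² be open and bounded, ε > 0, and let u : Ω̄ → ℝ^d be Lipschitz with Lipschitz constant at most C₁/ε, with |u(x)| ≤ 1 for all x ∈ Ω̄ and u(x) ∈ N for all x ∈ ∂Ω. Then for every x₀ ∈ Ω and every l ∈ [λ₀ ε, 1], if ε⁻² ∫_{B(x₀, 2l) ∩ Ω} f(u(x)) dx ≤ μ₀, then dist(u(x), N) ≤ δ for all x ∈ Ω̄ ∩ B(x₀, l). -/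

import Mathlib

open Metric Set MeasureTheory Real

noncomputable section

abbrev E2 : Type := EuclideanSpace ℝ (Fin 2)

/-- Clearing-out lemma: with λ₀ = δ/(2C₁) and μ₀ = (π/2)λ₀² f₁, if u is Lipschitz with
constant C₁/ε, |u| ≤ 1 on Ω̄, u ∈ N on ∂Ω, and the potential energy of u on
B(x₀, 2l) ∩ Ω is at most μ₀ ε², then dist(u, N) ≤ δ on Ω̄ ∩ B(x₀, l). -/
theorem stmt17 (d : ℕ) (hd : 1 ≤ d)
    (N : Set (EuclideanSpace ℝ (Fin d))) (hN_ne : N.Nonempty) (hN_cpt : IsCompact N)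
    (f : EuclideanSpace ℝ (Fin d) → ℝ) (hf_cont : Continuous f) (hf_nonneg : ∀ v, 0 ≤ f v)
    (δ : ℝ) (hδ0 : 0 < δ) (hδ1 : δ < 1) (C₁ : ℝ) (hC₁ : 0 < C₁)
    (f₁ : ℝ)
    (hf₁_def : f₁ = sInf (f '' {v : EuclideanSpace ℝ (Fin d) |
      ‖v‖ ≤ 1 ∧ δ/2 ≤ Metric.infDist v N}))
    (hf₁_pos : 0 < f₁)
    (Ω : Set E2) (hΩ_open : IsOpen Ω) (hΩ_bdd : Bornology.IsBounded Ω)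
    (ε : ℝ) (hε : 0 < ε)
    (u : E2 → EuclideanSpace ℝ (Fin d))
    (hu_lip : LipschitzOnWith (Real.toNNReal (C₁ / ε)) u (closure Ω))
    (hu_bd : ∀ x ∈ closure Ω, ‖u x‖ ≤ 1)
    (hu_N : ∀ x ∈ frontier Ω, u x ∈ N)
    (x₀ : E2) (hx₀ : x₀ ∈ Ω)
    (l : ℝ) (hl1 : (δ / (2 * C₁)) * ε ≤ l) (hl2 : l ≤ 1)
    (hsmall : (1/ε^2) * (∫ x in Metric.ball x₀ (2*l) ∩ Ω, f (u x)) ≤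
      (π/2) * (δ / (2 * C₁)) ^ 2 * f₁) :
    ∀ x ∈ closure Ω ∩ Metric.ball x₀ l, Metric.infDist (u x) N ≤ δ := by
  rintro x ⟨hxcl, hxball⟩
  by_contra hcon
  push_neg at hcon
  have h2C₁ : (0:ℝ) < 2 * C₁ := by linarith
  set lam0 : ℝ := δ / (2 * C₁) with hlam0def
  have hlam0pos : 0 < lam0 := div_pos hδ0 h2C₁
  set r : ℝ := lam0 * ε with hrdef
  have hrpos : 0 < r := mul_pos hlam0pos hε
  have hrl : r ≤ l := hl1
  have hCε : (0:ℝ) ≤ C₁ / ε := le_of_lt (div_pos hC₁ hε)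
  -- key pointwise estimates on closure Ω ∩ ball x r
  have key : ∀ y ∈ closure Ω, y ∈ ball x r → δ/2 ≤ infDist (u y) N ∧ f₁ ≤ f (u y) := by
    intro y hycl hyball
    have hdist : dist (u y) (u x) ≤ (C₁ / ε) * dist y x := by
      have := hu_lip.dist_le_mul y hycl x hxcl
      rwa [Real.coe_toNNReal _ hCε] at this
    have hlt : dist (u y) (u x) < δ / 2 := by
      have h1 : (C₁ / ε) * dist y x < (C₁ / ε) * r := by
        apply mul_lt_mul_of_pos_left (mem_ball.mp hyball) (div_pos hC₁ hε)
      have h2 : (C₁ / ε) * r = δ / 2 := by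
        field_simp [hrdef, hlam0def]
        rw [hrdef, hlam0def]; field_simp
      linarith
    have hinf : δ/2 ≤ infDist (u y) N := by
      have h3 := Metric.infDist_le_infDist_add_dist (x := u x) (y := u y) (s := N)
      rw [dist_comm (u x) (u y)] at h3
      linarith
    refine ⟨hinf, ?_⟩
    rw [hf₁_def]
    apply csInf_le
    · refine ⟨0, ?_⟩
      rintro z ⟨v, -, rfl⟩
      exact hf_nonneg v
    · exact ⟨u y, ⟨hu_bd y hycl, hinf⟩, rfl⟩
  -- x ∈ Ω
  have hxΩ : x ∈ Ω := by
    by_contra hxn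
    have hxfr : x ∈ frontier Ω := by
      rw [hΩ_open.frontier_eq]; exact ⟨hxcl, hxn⟩
    have : infDist (u x) N = 0 := Metric.infDist_zero_of_mem (hu_N x hxfr)
    linarith
  -- ball x r ⊆ Ω
  have hBΩ : ball x r ⊆ Ω := by
    have hcover : ball x r ⊆ Ω ∪ (closure Ω)ᶜ := by
      intro y hy
      by_cases hycl : y ∈ closure Ω
      · left
        by_contra hyn
        have hyfr : y ∈ frontier Ω := by
          rw [hΩ_open.frontier_eq]; exact ⟨hycl, hyn⟩
        have h0 : infDist (u y) N = 0 := Metric.infDist_zero_of_mem (hu_N y hyfr)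
        have := (key y hycl hy).1
        linarith
      · exact Or.inr hycl
    have hdisj : Disjoint Ω (closure Ω)ᶜ :=
      Set.disjoint_compl_right_iff_subset.mpr subset_closure
    rcases (convex_ball x r).isPreconnected.subset_or_subset hΩ_open
        (isClosed_closure.isOpen_compl) hdisj hcover with h | h
    · exact h
    · exact absurd hxcl (h (mem_ball_self hrpos))
  have hBsub : ball x r ⊆ ball x₀ (2*l) ∩ Ω := by
    intro y hy
    refine ⟨?_, hBΩ hy⟩
    have h1 : dist y x₀ ≤ dist y x + dist x x₀ := dist_triangle y x x₀
    have h2 : dist y x < r := mem_ball.mp hy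
    have h3 : dist x x₀ < l := mem_ball.mp hxball
    exact mem_ball.mpr (by linarith)
  -- integrability
  have hK : IsCompact (closure Ω) := hΩ_bdd.isCompact_closure
  have hcont : ContinuousOn (fun y => f (u y)) (closure Ω) :=
    hf_cont.comp_continuousOn hu_lip.continuousOn
  have hIntCl : IntegrableOn (fun y => f (u y)) (closure Ω) :=
    hcont.integrableOn_compact hK
  have hIntInter : IntegrableOn (fun y => f (u y)) (ball x₀ (2*l) ∩ Ω) :=
    hIntCl.mono_set ((Set.inter_subset_right).trans subset_closure)
  have hIntB : IntegrableOn (fun y => f (u y)) (ball x r) :=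
    hIntCl.mono_set (hBΩ.trans subset_closure)
  -- lower bound for integral on ball x r
  have hlow : f₁ * (volume (ball x r)).toReal ≤ ∫ y in ball x r, f (u y) := by
    have h := setIntegral_ge_of_const_le_real measurableSet_ball measure_ball_lt_top.ne
      (fun y hy => (key y (subset_closure (hBΩ hy)) hy).2) hIntB
    exact h
  have hmono : (∫ y in ball x r, f (u y)) ≤ ∫ y in ball x₀ (2*l) ∩ Ω, f (u y) := by
    apply setIntegral_mono_set hIntInter
    · exact Filter.Eventually.of_forall fun y => hf_nonneg _
    · exact Filter.Eventually.of_forall hBsub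
  -- the volume of the ball
  have hvol : (volume (ball x r)).toReal = π * r ^ 2 := by
    rw [EuclideanSpace.volume_ball, Fintype.card_fin,
      ENNReal.toReal_mul, ENNReal.toReal_pow, ENNReal.toReal_ofReal hrpos.le,
      ENNReal.toReal_ofReal (by positivity)]
    rw [show ((2:ℕ):ℝ)/2 + 1 = 2 by norm_num, Real.Gamma_two,
      Real.sq_sqrt Real.pi_pos.le]
    ring
  have hεsq : (0:ℝ) < ε ^ 2 := by positivity
  have hup : (∫ y in ball x₀ (2*l) ∩ Ω, f (u y)) ≤ (π/2) * lam0 ^ 2 * f₁ * ε ^ 2 := by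
    rw [div_mul_eq_mul_div, one_mul, div_le_iff₀ hεsq] at hsmall
    linarith
  rw [hvol] at hlow
  have hr2 : r ^ 2 = lam0 ^ 2 * ε ^ 2 := by rw [hrdef]; ring
  rw [hr2] at hlow
  have hA : (0:ℝ) < lam0 ^ 2 * ε ^ 2 := by positivity
  clear_value lam0 r
  nlinarith [mul_pos (mul_pos Real.pi_pos hf₁_pos) hA]
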